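/- Let (Ω, μ) be a probability space and X : ℕ → Ω → ℝ an i.i.d. sequence with μ(X_i = Δ_H) = p+ε and μ(X_i = −Δ_T) = q−ε (the heavy-coin log-likelihood increments). Let S_n = Σ_{i<n} X_i, fix B > 0, and let τ = inf{n ≥ 1 : S_n ≥ B or S_n < 0}. Then the probability of absorption at the upper barrier satisfies μ{ω : τ(ω) < ∞ and S_{τ(ω)}(ω) ≥ B} ≥ (Δ_H·(p+ε) − Δ_T·(q−ε)) / (2·(Δ_H+Δ_T)). -/

import Mathlib

open MeasureTheory ProbabilityTheory

lemma aux_cheby {Ω : Type*} [MeasurableSpace Ω] (P : Measure Ω) [IsProbabilityMeasure P]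
    (Y : ℕ → Ω → ℝ) (hmeas : ∀ i, Measurable (Y i))
    (hindep : iIndepFun Y P)
    (μR C B : ℝ) (hμ : 0 < μR) (hC0 : 0 ≤ C) (hC : ∀ i ω, |Y i ω - μR| ≤ C)
    (hmean : ∀ i, ∫ ω, Y i ω ∂P = μR) :
    P {ω | ∀ n, (∑ i ∈ Finset.range n, Y i ω) < B} = 0 := by
  classical
  set W : ℕ → Ω → ℝ := fun i ω => Y i ω - μR with hW
  have hWmeas : ∀ i, Measurable (W i) := fun i => (hmeas i).sub measurable_const
  have hWbd : ∀ i ω, |W i ω| ≤ C := hC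
  have hWint : ∀ i, Integrable (W i) P := fun i =>
    Integrable.mono' (integrable_const C) (hWmeas i).aestronglyMeasurable
      (Filter.Eventually.of_forall fun ω => by simpa using hWbd i ω)
  have hWmean : ∀ i, ∫ ω, W i ω ∂P = 0 := by
    intro i
    rw [integral_sub (Integrable.mono' (integrable_const (C + |μR|))
        (hmeas i).aestronglyMeasurable (Filter.Eventually.of_forall fun ω => by
          have := hC i ω
          have : |Y i ω| ≤ C + |μR| := by
            calc |Y i ω| = |(Y i ω - μR) + μR| := by ring_nf
            _ ≤ |Y i ω - μR| + |μR| := abs_add_le _ _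
            _ ≤ C + |μR| := by linarith [hC i ω]
          simpa using this)) (integrable_const μR)]
    simp [hmean i]
  -- integrability of products
  have hprodint : ∀ i j, Integrable (fun ω => W i ω * W j ω) P := by
    intro i j
    refine Integrable.mono' (integrable_const (C * C))
      ((hWmeas i).mul (hWmeas j)).aestronglyMeasurable
      (Filter.Eventually.of_forall fun ω => ?_)
    rw [Real.norm_eq_abs, abs_mul]
    exact mul_le_mul (hWbd i ω) (hWbd j ω) (abs_nonneg _) hC0
  have hcross : ∀ i j, i ≠ j → ∫ ω, W i ω * W j ω ∂P = 0 := by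
    intro i j hij
    have hIF : IndepFun (W i) (W j) P :=
      IndepFun.comp (hindep.indepFun hij) (measurable_id.sub measurable_const)
        (measurable_id.sub measurable_const)
    have h2 := hIF.integral_mul_eq_mul_integral (hWint i).aestronglyMeasurable (hWint j).aestronglyMeasurable
    have h3 : ∫ ω, (W i * W j) ω ∂P = ∫ ω, W i ω * W j ω ∂P := rfl
    rw [← h3, h2, hWmean i, hWmean j, mul_zero]
  have hsq : ∀ i, ∫ ω, W i ω * W i ω ∂P ≤ C * C := by
    intro i
    calc ∫ ω, W i ω * W i ω ∂P ≤ ∫ _ω, C * C ∂P := by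
          refine integral_mono (hprodint i i) (integrable_const _) fun ω => ?_
          have := hWbd i ω
          nlinarith [abs_nonneg (W i ω), neg_abs_le (W i ω), le_abs_self (W i ω)]
      _ = C * C := by simp
  -- second moment bound
  have hQ : ∀ M : ℕ, ∫ ω, (∑ i ∈ Finset.range M, W i ω) ^ 2 ∂P ≤ M * (C * C) := by
    intro M
    have hexp : ∀ ω, (∑ i ∈ Finset.range M, W i ω) ^ 2
        = ∑ i ∈ Finset.range M, ∑ j ∈ Finset.range M, W i ω * W j ω := by
      intro ω
      rw [sq, Finset.sum_mul_sum]
    calc ∫ ω, (∑ i ∈ Finset.range M, W i ω) ^ 2 ∂P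
        = ∫ ω, ∑ i ∈ Finset.range M, ∑ j ∈ Finset.range M, W i ω * W j ω ∂P := by
          simp_rw [hexp]
      _ = ∑ i ∈ Finset.range M, ∑ j ∈ Finset.range M, ∫ ω, W i ω * W j ω ∂P := by
          rw [integral_finset_sum _ fun i _ => integrable_finset_sum _ fun j _ => hprodint i j]
          exact Finset.sum_congr rfl fun i _ =>
            integral_finset_sum _ fun j _ => hprodint i j
      _ = ∑ i ∈ Finset.range M, ∫ ω, W i ω * W i ω ∂P := by
          refine Finset.sum_congr rfl fun i hi => ?_
          rw [Finset.sum_eq_single i]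
          · intro j _ hji
            exact hcross i j (Ne.symm hji)
          · intro hi'; exact absurd hi hi'
      _ ≤ ∑ _i ∈ Finset.range M, (C * C) := Finset.sum_le_sum fun i _ => hsq i
      _ = M * (C * C) := by simp [mul_comm]
  -- Markov step
  set T : ℕ → Ω → ℝ := fun M ω => ∑ i ∈ Finset.range M, W i ω with hT
  have hTmeas : ∀ M, Measurable (T M) := fun M =>
    Finset.measurable_sum _ fun i _ => hWmeas i
  have hTint : ∀ M, Integrable (fun ω => (T M ω) ^ 2) P := by
    intro M
    refine Integrable.mono' (integrable_const ((M * C) ^ 2))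
      ((hTmeas M).pow_const 2).aestronglyMeasurable (Filter.Eventually.of_forall fun ω => ?_)
    have h1 : |T M ω| ≤ M * C := by
      calc |T M ω| ≤ ∑ i ∈ Finset.range M, |W i ω| := Finset.abs_sum_le_sum_abs _ _
        _ ≤ ∑ _i ∈ Finset.range M, C := Finset.sum_le_sum fun i _ => hWbd i ω
        _ = M * C := by simp [mul_comm]
    rw [Real.norm_eq_abs, abs_pow]
    calc |T M ω| ^ 2 ≤ (M * C) ^ 2 := by
          apply pow_le_pow_left₀ (abs_nonneg _) h1
      _ = (M * C) ^ 2 := rfl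
  have key : ∀ M : ℕ, (M : ℝ) * μR - B > 0 →
      (P {ω | ∀ n, (∑ i ∈ Finset.range n, Y i ω) < B}).toReal
        ≤ M * (C * C) / ((M : ℝ) * μR - B) ^ 2 := by
    intro M hMB
    have hsub : {ω | ∀ n, (∑ i ∈ Finset.range n, Y i ω) < B}
        ⊆ {ω | ((M : ℝ) * μR - B) ^ 2 ≤ (T M ω) ^ 2} := by
      intro ω hω
      have h1 : (∑ i ∈ Finset.range M, Y i ω) < B := hω M
      have h2 : T M ω = (∑ i ∈ Finset.range M, Y i ω) - M * μR := by
        simp [hT, hW, Finset.sum_sub_distrib, mul_comm]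
      have h3 : T M ω ≤ -(((M : ℝ) * μR - B)) := by rw [h2]; linarith
      have : ((M : ℝ) * μR - B) ≤ |T M ω| := by
        rw [abs_of_nonpos (by linarith)]; linarith
      calc ((M : ℝ) * μR - B) ^ 2 ≤ |T M ω| ^ 2 :=
            pow_le_pow_left₀ (le_of_lt hMB) this 2
        _ = (T M ω) ^ 2 := sq_abs _
    have hmarkov := mul_meas_ge_le_integral_of_nonneg
      (Filter.Eventually.of_forall fun ω => sq_nonneg (T M ω)) (hTint M)
      (((M : ℝ) * μR - B) ^ 2)
    have hmono : P {ω | ∀ n, (∑ i ∈ Finset.range n, Y i ω) < B}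
        ≤ P {ω | ((M : ℝ) * μR - B) ^ 2 ≤ (T M ω) ^ 2} := measure_mono hsub
    have hfin : P {ω | ((M : ℝ) * μR - B) ^ 2 ≤ (T M ω) ^ 2} ≠ ⊤ := measure_ne_top _ _
    have htr : (P {ω | ∀ n, (∑ i ∈ Finset.range n, Y i ω) < B}).toReal
        ≤ (P {ω | ((M : ℝ) * μR - B) ^ 2 ≤ (T M ω) ^ 2}).toReal :=
      ENNReal.toReal_mono hfin hmono
    have hpos : (0 : ℝ) < (((M : ℝ)) * μR - B) ^ 2 := by positivity
    rw [div_eq_inv_mul, ← mul_le_mul_iff_right₀ hpos]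
    calc ((M : ℝ) * μR - B) ^ 2 * (P {ω | ∀ n, (∑ i ∈ Finset.range n, Y i ω) < B}).toReal
        ≤ ((M : ℝ) * μR - B) ^ 2 * (P {ω | ((M : ℝ) * μR - B) ^ 2 ≤ (T M ω) ^ 2}).toReal := by
          exact mul_le_mul_of_nonneg_left htr (le_of_lt hpos)
      _ ≤ ∫ ω, (T M ω) ^ 2 ∂P := hmarkov
      _ ≤ M * (C * C) := hQ M
      _ = ((M : ℝ) * μR - B) ^ 2 * ((((M : ℝ) * μR - B) ^ 2)⁻¹ * ((M : ℝ) * (C * C))) := by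
          field_simp
  -- conclude
  set t := (P {ω | ∀ n, (∑ i ∈ Finset.range n, Y i ω) < B}).toReal with ht
  have htle : ∀ᶠ (M : ℕ) in Filter.atTop, t ≤ (4 * (C * C) / μR ^ 2) / M := by
    obtain ⟨M₀, hM₀⟩ := exists_nat_ge ((2 * |B| + 2) / μR)
    refine Filter.eventually_atTop.2 ⟨M₀ + 1, fun M hM => ?_⟩
    have hMr : ((2 * |B| + 2) / μR) ≤ (M : ℝ) := le_trans hM₀ (by exact_mod_cast Nat.le_of_succ_le hM)
    have hMμ : 2 * |B| + 2 ≤ (M : ℝ) * μR := by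
      rw [div_le_iff₀ hμ] at hMr; linarith
    have h1 : (M : ℝ) * μR - B > 0 := by
      have hb1 : B ≤ |B| := le_abs_self B
      have hb2 : (0:ℝ) ≤ |B| := abs_nonneg B
      linarith
    have h2 : (M : ℝ) * μR / 2 ≤ (M : ℝ) * μR - B := by
      have hb1 : B ≤ |B| := le_abs_self B
      have hb2 : (0:ℝ) ≤ |B| := abs_nonneg B
      linarith
    have h3 := key M h1
    have hM1 : (1 : ℝ) ≤ (M : ℝ) := by
      have : (1 : ℕ) ≤ M := le_trans (Nat.le_add_left 1 M₀) hM
      exact_mod_cast this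
    have h4 : (M : ℝ) * (C * C) / ((M : ℝ) * μR - B) ^ 2
        ≤ (M : ℝ) * (C * C) / ((M : ℝ) * μR / 2) ^ 2 := by
      apply div_le_div_of_nonneg_left _ _ _
      · positivity
      · have : (0:ℝ) < (M:ℝ) * μR / 2 := by positivity
        positivity
      · apply pow_le_pow_left₀ (by positivity) h2
    have h5 : (M : ℝ) * (C * C) / ((M : ℝ) * μR / 2) ^ 2 = (4 * (C * C) / μR ^ 2) / M := by
      field_simp
      ring
    calc t ≤ (M : ℝ) * (C * C) / ((M : ℝ) * μR - B) ^ 2 := h3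
      _ ≤ (M : ℝ) * (C * C) / ((M : ℝ) * μR / 2) ^ 2 := h4
      _ = (4 * (C * C) / μR ^ 2) / M := h5
  have hz : Filter.Tendsto (fun M : ℕ => (4 * (C * C) / μR ^ 2) / (M : ℝ)) Filter.atTop (nhds 0) :=
    tendsto_const_div_atTop_nhds_zero_nat _
  have ht0 : t ≤ 0 := ge_of_tendsto hz htle
  have htnn : 0 ≤ t := ENNReal.toReal_nonneg
  have hteq : t = 0 := le_antisymm ht0 htnn
  have hfin : P {ω | ∀ n, (∑ i ∈ Finset.range n, Y i ω) < B} ≠ ⊤ := measure_ne_top _ _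
  rw [← ENNReal.ofReal_toReal hfin, ← ht, hteq, ENNReal.ofReal_zero]

lemma aux_ville {Ω : Type*} [MeasurableSpace Ω] (P : Measure Ω) [IsProbabilityMeasure P]
    (Z : ℕ → Ω → ℝ) (hZmeas : ∀ i, Measurable (Z i))
    (hZindep : iIndepFun Z P)
    (hZint : ∀ i, Integrable (fun ω => Real.exp (-(Z i ω))) P)
    (hZexp : ∀ i, ∫ ω, Real.exp (-(Z i ω)) ∂P = 1)
    (h : ℝ) (hh : 0 < h) (M : ℕ) :
    P {ω | ∃ m, m < M ∧ (∑ i ∈ Finset.range m, Z i ω) < -h}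
      ≤ ENNReal.ofReal (Real.exp (-h)) := by
  classical
  set T : ℕ → Ω → ℝ := fun m ω => ∑ i ∈ Finset.range m, Z i ω with hTdef
  have hTmeas : ∀ m, Measurable (T m) := fun m =>
    Finset.measurable_sum _ fun i _ => hZmeas i
  set AL : ℕ → Set Ω := fun m => {ω | ∀ k ≤ m, -h ≤ T k ω} with hALdef
  set F : ℕ → Set Ω := fun m => {ω | T m ω < -h ∧ ∀ k < m, -h ≤ T k ω} with hFdef
  have hALmeas : ∀ m, MeasurableSet (AL m) := by
    intro m
    have : AL m = ⋂ k, ⋂ (_ : k ≤ m), {ω | -h ≤ T k ω} := by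
      ext ω; simp [hALdef]
    rw [this]
    exact MeasurableSet.iInter fun k => MeasurableSet.iInter fun _ =>
      measurableSet_le measurable_const (hTmeas k)
  have hFmeas : ∀ m, MeasurableSet (F m) := by
    intro m
    have : F m = ({ω | T m ω < -h} ∩ ⋂ k, ⋂ (_ : k < m), {ω | -h ≤ T k ω}) := by
      ext ω; simp [hFdef]
    rw [this]
    exact (measurableSet_lt (hTmeas m) measurable_const).inter
      (MeasurableSet.iInter fun k => MeasurableSet.iInter fun _ =>
        measurableSet_le measurable_const (hTmeas k))
  set g : ℕ → Ω → ℝ := fun m => (AL m).indicator (fun ω => Real.exp (-(T m ω))) with hgdef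
  set f : ℕ → Ω → ℝ := fun m => (F m).indicator (fun ω => Real.exp (-(T m ω))) with hfdef
  have hgmeas : ∀ m, Measurable (g m) := fun m =>
    Measurable.indicator ((hTmeas m).neg.exp) (hALmeas m)
  have hfmeas : ∀ m, Measurable (f m) := fun m =>
    Measurable.indicator ((hTmeas m).neg.exp) (hFmeas m)
  have hgnn : ∀ m ω, 0 ≤ g m ω := fun m ω =>
    Set.indicator_nonneg (fun ω _ => (Real.exp_pos _).le) ω
  have hfnn : ∀ m ω, 0 ≤ f m ω := fun m ω =>
    Set.indicator_nonneg (fun ω _ => (Real.exp_pos _).le) ω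
  have hgbd : ∀ m ω, |g m ω| ≤ Real.exp h := by
    intro m ω
    rw [abs_of_nonneg (hgnn m ω)]
    by_cases hω : ω ∈ AL m
    · rw [hgdef]; simp only [Set.indicator_of_mem hω]
      have : -h ≤ T m ω := hω m le_rfl
      exact Real.exp_le_exp.2 (by linarith)
    · rw [hgdef]; simp only [Set.indicator_of_notMem hω]
      exact (Real.exp_pos _).le
  have hgint : ∀ m, Integrable (g m) P := fun m =>
    Integrable.mono' (integrable_const (Real.exp h)) (hgmeas m).aestronglyMeasurable
      (Filter.Eventually.of_forall fun ω => by simpa using hgbd m ω)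
  have hprodint : ∀ m, Integrable (fun ω => g m ω * Real.exp (-(Z m ω))) P := fun m =>
    Integrable.bdd_mul (hZint m) (hgmeas m).aestronglyMeasurable
      (Filter.Eventually.of_forall fun ω => by simpa using hgbd m ω)
  -- pointwise splitting identity
  have K1 : ∀ m ω, g m ω * Real.exp (-(Z m ω)) = g (m + 1) ω + f (m + 1) ω := by
    intro m ω
    have hTsucc : T (m + 1) ω = T m ω + Z m ω := Finset.sum_range_succ _ _
    have hALsub : ω ∈ AL (m+1) → ω ∈ AL m := fun hω k hk => hω k (le_trans hk (Nat.le_succ m))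
    have hFiff : ω ∈ F (m+1) ↔ (T (m+1) ω < -h ∧ ω ∈ AL m) := by
      constructor
      · rintro ⟨h1, h2⟩; exact ⟨h1, fun k hk => h2 k (Nat.lt_succ_of_le hk)⟩
      · rintro ⟨h1, h2⟩; exact ⟨h1, fun k hk => h2 k (Nat.lt_succ_iff.1 hk)⟩
    by_cases hAL : ω ∈ AL m
    · have hexp : Real.exp (-(T m ω)) * Real.exp (-(Z m ω)) = Real.exp (-(T (m+1) ω)) := by
        rw [← Real.exp_add, hTsucc]; ring_nf
      by_cases hok : -h ≤ T (m+1) ω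
      · have hin : ω ∈ AL (m+1) := by
          intro k hk
          rcases eq_or_lt_of_le hk with hk' | hk'
          · rw [hk']; exact hok
          · exact hAL k (Nat.lt_succ_iff.1 hk')
        have hnotF : ω ∉ F (m+1) := fun hF => absurd hF.1 (not_lt.2 hok)
        rw [hgdef, hfdef]
        simp only [Set.indicator_of_mem hAL, Set.indicator_of_mem hin,
          Set.indicator_of_notMem hnotF, add_zero]
        exact hexp
      · have hin : ω ∈ F (m+1) := hFiff.2 ⟨not_le.1 hok, hAL⟩
        have hnotAL : ω ∉ AL (m+1) := fun hω => hok (hω (m+1) le_rfl)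
        rw [hgdef, hfdef]
        simp only [Set.indicator_of_mem hAL, Set.indicator_of_mem hin,
          Set.indicator_of_notMem hnotAL, zero_add]
        exact hexp
    · have h1 : ω ∉ AL (m+1) := fun hω => hAL (hALsub hω)
      have h2 : ω ∉ F (m+1) := fun hω => hAL (hFiff.1 hω).2
      rw [hgdef, hfdef]
      simp only [Set.indicator_of_notMem hAL, Set.indicator_of_notMem h1,
        Set.indicator_of_notMem h2, zero_mul, add_zero]
  have hfint : ∀ m, Integrable (f m) P := by
    intro m
    cases m with
    | zero =>
      have hz : f 0 = fun _ => 0 := by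
        funext ω
        have hT0 : T 0 ω = 0 := by simp [hTdef]
        have hnot : ω ∉ F 0 := by
          intro hω
          have := hω.1
          rw [hT0] at this
          linarith
        rw [hfdef]
        simp [Set.indicator_of_notMem hnot]
      rw [hz]
      exact integrable_zero _ _ _
    | succ m =>
      have : f (m+1) = fun ω => g m ω * Real.exp (-(Z m ω)) - g (m+1) ω := by
        funext ω; rw [K1 m ω]; ring
      rw [this]
      exact (hprodint m).sub (hgint (m+1))
  -- the independence factorization
  have K2 : ∀ m, ∫ ω, g m ω * Real.exp (-(Z m ω)) ∂P = ∫ ω, g m ω ∂P := by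
    intro m
    have hdisj : Disjoint (Finset.range m) ({m} : Finset ℕ) := by
      simp [Finset.disjoint_singleton_right]
    have base := hZindep.indepFun_finset (Finset.range m) {m} hdisj hZmeas
    set pT : ℕ → (↥(Finset.range m) → ℝ) → ℝ :=
      fun k v => ∑ i ∈ Finset.range k, if hi : i ∈ Finset.range m then v ⟨i, hi⟩ else 0 with hpTdef
    have hpTmeas : ∀ k, Measurable (pT k) := by
      intro k
      apply Finset.measurable_sum
      intro i _
      by_cases hi : i ∈ Finset.range m
      · simp only [hi, dif_pos]; exact measurable_pi_apply _
      · simp only [hi, dif_neg, not_false_iff]; exact measurable_const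
    have hpT : ∀ k, k ≤ m → ∀ ω, pT k (fun i => Z i ω) = T k ω := by
      intro k hk ω
      rw [hpTdef, hTdef]
      refine Finset.sum_congr rfl fun i hi => ?_
      have : i ∈ Finset.range m :=
        Finset.mem_range.2 (lt_of_lt_of_le (Finset.mem_range.1 hi) hk)
      simp [this]
    set Aset : Set (↥(Finset.range m) → ℝ) := {v | ∀ k ≤ m, -h ≤ pT k v} with hAsetdef
    have hAsetmeas : MeasurableSet Aset := by
      have : Aset = ⋂ k, ⋂ (_ : k ≤ m), {v | -h ≤ pT k v} := by
        ext v; simp [hAsetdef]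
      rw [this]
      exact MeasurableSet.iInter fun k => MeasurableSet.iInter fun _ =>
        measurableSet_le measurable_const (hpTmeas k)
    set ψ : (↥(Finset.range m) → ℝ) → ℝ :=
      Aset.indicator (fun v => Real.exp (-(pT m v))) with hψdef
    have hψmeas : Measurable ψ :=
      Measurable.indicator ((hpTmeas m).neg.exp) hAsetmeas
    set χ : (↥({m} : Finset ℕ) → ℝ) → ℝ :=
      fun w => Real.exp (-(w ⟨m, Finset.mem_singleton_self m⟩)) with hχdef
    have hχmeas : Measurable χ := ((measurable_pi_apply _).neg).exp
    have hIF0 : IndepFun (ψ ∘ (fun ω (i : ↥(Finset.range m)) => Z i ω))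
        (χ ∘ (fun ω (i : ↥({m} : Finset ℕ)) => Z i ω)) P :=
      base.comp hψmeas hχmeas
    have hcomp1 : (ψ ∘ (fun ω (i : ↥(Finset.range m)) => Z i ω)) = g m := by
      funext ω
      have hmem : (fun i : ↥(Finset.range m) => Z i ω) ∈ Aset ↔ ω ∈ AL m := by
        constructor
        · intro hv k hk
          have := hv k hk
          rwa [hpT k hk ω] at this
        · intro hω k hk
          rw [hpT k hk ω]
          exact hω k hk
      by_cases hω : ω ∈ AL m
      · simp only [Function.comp_apply, hψdef, hgdef,
          Set.indicator_of_mem (hmem.2 hω), Set.indicator_of_mem hω]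
        rw [hpT m le_rfl ω]
      · simp only [Function.comp_apply, hψdef, hgdef,
          Set.indicator_of_notMem (fun hv => hω (hmem.1 hv)),
          Set.indicator_of_notMem hω]
    have hcomp2 : (χ ∘ (fun ω (i : ↥({m} : Finset ℕ)) => Z i ω))
        = fun ω => Real.exp (-(Z m ω)) := rfl
    rw [hcomp1, hcomp2] at hIF0
    have := hIF0.integral_mul_eq_mul_integral (hgint m).aestronglyMeasurable (hZint m).aestronglyMeasurable
    have heq : ∫ ω, (g m * fun ω => Real.exp (-(Z m ω))) ω ∂P
        = ∫ ω, g m ω * Real.exp (-(Z m ω)) ∂P := rfl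
    rw [← heq, this, hZexp m, mul_one]
  -- telescoping
  have tele : ∀ N : ℕ, (∫ ω, g N ω ∂P) + ∑ m ∈ Finset.range (N+1), (∫ ω, f m ω ∂P) = 1 := by
    intro N
    induction N with
    | zero =>
      have hg0 : g 0 = fun _ => 1 := by
        funext ω
        have hT0 : T 0 ω = 0 := by simp [hTdef]
        have hmem : ω ∈ AL 0 := by
          intro k hk
          interval_cases k
          rw [hT0]; linarith
        rw [hgdef]
        simp only [Set.indicator_of_mem hmem, hT0, neg_zero, Real.exp_zero]
      have hf0 : f 0 = fun _ => 0 := by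
        funext ω
        have hT0 : T 0 ω = 0 := by simp [hTdef]
        have hnot : ω ∉ F 0 := by
          intro hω
          have h1 : T 0 ω < -h := hω.1
          rw [hT0] at h1
          linarith
        rw [hfdef]
        simp [Set.indicator_of_notMem hnot]
      rw [show (0:ℕ)+1 = 1 from rfl, Finset.sum_range_one, hg0, hf0]
      simp
    | succ N ih =>
      have hsplit : ∫ ω, g (N+1) ω ∂P + ∫ ω, f (N+1) ω ∂P = ∫ ω, g N ω ∂P := by
        rw [← integral_add (hgint (N+1)) (hfint (N+1))]
        rw [← K2 N]
        congr 1
        funext ω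
        exact (K1 N ω).symm
      rw [Finset.sum_range_succ]
      have : ∫ ω, g (N+1) ω ∂P + (∑ m ∈ Finset.range (N+1), ∫ ω, f m ω ∂P + ∫ ω, f (N+1) ω ∂P)
          = (∫ ω, g (N+1) ω ∂P + ∫ ω, f (N+1) ω ∂P) + ∑ m ∈ Finset.range (N+1), ∫ ω, f m ω ∂P := by
        ring
      rw [this, hsplit, ih]
  -- sum of P(F m) is small
  have hFsum : ∑ m ∈ Finset.range M, (P (F m)).toReal ≤ Real.exp (-h) := by
    have hstep : ∀ m, Real.exp h * (P (F m)).toReal ≤ ∫ ω, f m ω ∂P := by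
      intro m
      have hsub : F m ⊆ {ω | Real.exp h ≤ f m ω} := by
        intro ω hω
        have : Real.exp h ≤ Real.exp (-(T m ω)) := Real.exp_le_exp.2 (by linarith [hω.1])
        simpa [hfdef, Set.indicator_of_mem hω] using this
      have hmarkov := mul_meas_ge_le_integral_of_nonneg
        (Filter.Eventually.of_forall (hfnn m)) (hfint m) (Real.exp h)
      calc Real.exp h * (P (F m)).toReal
          ≤ Real.exp h * (P {ω | Real.exp h ≤ f m ω}).toReal := by
            apply mul_le_mul_of_nonneg_left _ (Real.exp_pos h).le
            exact ENNReal.toReal_mono (measure_ne_top _ _) (measure_mono hsub)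
        _ ≤ ∫ ω, f m ω ∂P := hmarkov
    have hsum1 : ∑ m ∈ Finset.range M, ∫ ω, f m ω ∂P ≤ 1 := by
      have h1 : ∑ m ∈ Finset.range M, ∫ ω, f m ω ∂P
          ≤ ∑ m ∈ Finset.range (M+1), ∫ ω, f m ω ∂P := by
        apply Finset.sum_le_sum_of_subset_of_nonneg
        · exact Finset.range_subset_range.2 (Nat.le_succ M)
        · intro m _ _
          exact integral_nonneg (hfnn m)
      have h2 : ∑ m ∈ Finset.range (M+1), ∫ ω, f m ω ∂P ≤ 1 := by
        have := tele M
        have hg : 0 ≤ ∫ ω, g M ω ∂P := integral_nonneg (hgnn M)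
        linarith
      linarith
    have : Real.exp h * ∑ m ∈ Finset.range M, (P (F m)).toReal ≤ 1 := by
      rw [Finset.mul_sum]
      calc ∑ m ∈ Finset.range M, Real.exp h * (P (F m)).toReal
          ≤ ∑ m ∈ Finset.range M, ∫ ω, f m ω ∂P := Finset.sum_le_sum fun m _ => hstep m
        _ ≤ 1 := hsum1
    have hE : Real.exp h * Real.exp (-h) = 1 := by
      rw [← Real.exp_add]; simp
    nlinarith [Real.exp_pos h, this]
  -- union bound
  have hsub : {ω | ∃ m, m < M ∧ T m ω < -h} ⊆ ⋃ m ∈ Finset.range M, F m := by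
    rintro ω ⟨m, hm, hlt⟩
    have hne : {k | T k ω < -h}.Nonempty := ⟨m, hlt⟩
    set m₀ := sInf {k | T k ω < -h} with hm₀
    have hm₀mem : m₀ ∈ {k | T k ω < -h} := Nat.sInf_mem hne
    have hm₀le : m₀ ≤ m := Nat.sInf_le hlt
    have hFm : ω ∈ F m₀ := by
      refine ⟨hm₀mem, fun k hk => ?_⟩
      have : k ∉ {k | T k ω < -h} := Nat.notMem_of_lt_sInf hk
      exact not_lt.1 this
    exact Set.mem_biUnion (Finset.mem_range.2 (lt_of_le_of_lt hm₀le hm)) hFm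
  calc P {ω | ∃ m, m < M ∧ T m ω < -h}
      ≤ P (⋃ m ∈ Finset.range M, F m) := measure_mono hsub
    _ ≤ ∑ m ∈ Finset.range M, P (F m) := measure_biUnion_finset_le _ _
    _ = ENNReal.ofReal (∑ m ∈ Finset.range M, (P (F m)).toReal) := by
        rw [ENNReal.ofReal_sum_of_nonneg fun m _ => ENNReal.toReal_nonneg]
        exact Finset.sum_congr rfl fun m _ => (ENNReal.ofReal_toReal (measure_ne_top _ _)).symm
    _ ≤ ENNReal.ofReal (Real.exp (-h)) := ENNReal.ofReal_le_ofReal hFsum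

/-- For the heavy-coin log-likelihood random walk (i.i.d. steps `+Δ_H` w.p. `p+ε`,
`−Δ_T` w.p. `q−ε`) with absorbing barriers at `B > 0` above and at every state below `0`,
the probability of absorption at the upper barrier is at least
`(Δ_H(p+ε) − Δ_T(q−ε)) / (2(Δ_H+Δ_T))`. -/
theorem heavy_upper_absorption_prob
    (ε p : ℝ) (hε : ε ∈ Set.Ioo (0:ℝ) (1/2)) (hp : p ∈ Set.Ioo ε (1 - ε))
    (q ΔH ΔT : ℝ) (hq : q = 1 - p)
    (hΔH : ΔH = Real.log ((p + ε) / (p - ε)))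
    (hΔT : ΔT = Real.log ((q + ε) / (q - ε)))
    {Ω : Type*} [MeasurableSpace Ω] (P : Measure Ω) [IsProbabilityMeasure P]
    (X : ℕ → Ω → ℝ) (hXmeas : ∀ i, Measurable (X i))
    (hXindep : iIndepFun X P)
    (hXup : ∀ i, P {ω | X i ω = ΔH} = ENNReal.ofReal (p + ε))
    (hXdown : ∀ i, P {ω | X i ω = -ΔT} = ENNReal.ofReal (q - ε))
    (B : ℝ) (hB : 0 < B)
    (S : ℕ → Ω → ℝ) (hS : ∀ n ω, S n ω = ∑ i ∈ Finset.range n, X i ω)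
    (hit : Ω → Set ℕ)
    (hhit : ∀ ω, hit ω = {n : ℕ | 1 ≤ n ∧ (B ≤ S n ω ∨ S n ω < 0)}) :
    ENNReal.ofReal ((ΔH * (p + ε) - ΔT * (q - ε)) / (2 * (ΔH + ΔT)))
      ≤ P {ω | (hit ω).Nonempty ∧ B ≤ S (sInf (hit ω)) ω} := by
  classical
  subst hq
  obtain ⟨hε0, hε12⟩ := hε
  obtain ⟨hpl, hpr⟩ := hp
  -- basic positivity
  have ha : 0 < p - ε := by linarith
  have hb : 0 < p + ε := by linarith
  have hab : p - ε < p + ε := by linarith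
  have hb1 : p + ε < 1 := by linarith
  have hqe : 0 < (1 - p) - ε := by linarith
  have hqe' : 0 < (1 - p) + ε := by linarith
  have hqlt : (1 - p) - ε < (1 - p) + ε := by linarith
  have hratH : (1:ℝ) < (p + ε) / (p - ε) := (one_lt_div ha).2 hab
  have hratT : (1:ℝ) < ((1 - p) + ε) / ((1 - p) - ε) := (one_lt_div hqe).2 hqlt
  have hΔHpos : 0 < ΔH := by rw [hΔH]; exact Real.log_pos hratH
  have hΔTpos : 0 < ΔT := by rw [hΔT]; exact Real.log_pos hratT
  have hne : ΔH ≠ -ΔT := by intro hc; rw [hc] at hΔHpos; linarith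
  have hexpH : Real.exp (-ΔH) = (p - ε) / (p + ε) := by
    rw [hΔH, ← Real.log_inv, Real.exp_log (by positivity)]
    rw [inv_div]
  have hexpT : Real.exp ΔT = ((1 - p) + ε) / ((1 - p) - ε) := by
    rw [hΔT, Real.exp_log (by positivity)]
  -- log inequalities
  have hlog1 : ΔH * (p - ε) ≤ 2 * ε := by
    have h1 : Real.log ((p + ε) / (p - ε)) ≤ (p + ε) / (p - ε) - 1 :=
      Real.log_le_sub_one_of_pos (by positivity)
    have h2 : ΔH * (p - ε) ≤ ((p + ε) / (p - ε) - 1) * (p - ε) := by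
      rw [hΔH]
      exact mul_le_mul_of_nonneg_right h1 ha.le
    have h3 : ((p + ε) / (p - ε) - 1) * (p - ε) = 2 * ε := by
      field_simp
      ring
    linarith
  have hlog2 : 2 * ε ≤ ΔT * ((1 - p) + ε) := by
    have h1 : Real.log (((1 - p) - ε) / ((1 - p) + ε)) ≤ ((1 - p) - ε) / ((1 - p) + ε) - 1 :=
      Real.log_le_sub_one_of_pos (by positivity)
    have h2 : ΔT = -Real.log (((1 - p) - ε) / ((1 - p) + ε)) := by
      rw [hΔT, ← Real.log_inv, inv_div]
    have h3 : (1 - ((1 - p) - ε) / ((1 - p) + ε)) * ((1 - p) + ε) = 2 * ε := by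
      field_simp
      ring
    have h4 : (1 - ((1 - p) - ε) / ((1 - p) + ε)) ≤ ΔT := by rw [h2]; linarith
    calc 2 * ε = (1 - ((1 - p) - ε) / ((1 - p) + ε)) * ((1 - p) + ε) := h3.symm
      _ ≤ ΔT * ((1 - p) + ε) := mul_le_mul_of_nonneg_right h4 hqe'.le
  have hlog3 : 2 * ε < ΔH * (p + ε) := by
    have h1 : Real.log ((p - ε) / (p + ε)) < (p - ε) / (p + ε) - 1 :=
      Real.log_lt_sub_one_of_pos (by positivity) (by
        intro hc
        rw [div_eq_one_iff_eq (by positivity)] at hc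
        linarith)
    have h2 : ΔH = -Real.log ((p - ε) / (p + ε)) := by
      rw [hΔH, ← Real.log_inv, inv_div]
    have h3 : (1 - (p - ε) / (p + ε)) * (p + ε) = 2 * ε := by
      field_simp
      ring
    have h4 : (1 - (p - ε) / (p + ε)) < ΔH := by rw [h2]; linarith
    calc 2 * ε = (1 - (p - ε) / (p + ε)) * (p + ε) := h3.symm
      _ < ΔH * (p + ε) := by
        apply mul_lt_mul_of_pos_right h4 hb
  have hlog4 : ΔT * ((1 - p) - ε) ≤ 2 * ε := by
    have h1 : Real.log (((1 - p) + ε) / ((1 - p) - ε)) ≤ ((1 - p) + ε) / ((1 - p) - ε) - 1 :=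
      Real.log_le_sub_one_of_pos (by positivity)
    have h2 : ΔT * ((1 - p) - ε) ≤ (((1 - p) + ε) / ((1 - p) - ε) - 1) * ((1 - p) - ε) := by
      rw [hΔT]
      exact mul_le_mul_of_nonneg_right h1 hqe.le
    have h3 : (((1 - p) + ε) / ((1 - p) - ε) - 1) * ((1 - p) - ε) = 2 * ε := by
      field_simp
      ring
    linarith
  set μR : ℝ := ΔH * (p + ε) - ΔT * ((1 - p) - ε) with hμRdef
  have hμpos : 0 < μR := by rw [hμRdef]; linarith
  have hc2 : (ΔH * (p + ε) - ΔT * ((1 - p) - ε)) / (2 * (ΔH + ΔT)) ≤ 2 * ε := by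
    rw [div_le_iff₀ (by positivity)]
    have e1 : ΔH * (p + ε) = ΔH * (p - ε) + 2 * ε * ΔH := by ring
    have e2 : ΔT * ((1 - p) - ε) = ΔT * ((1 - p) + ε) - 2 * ε * ΔT := by ring
    have : ΔH * (p + ε) - ΔT * ((1 - p) - ε) ≤ 2 * ε * ΔH + 2 * ε * ΔT := by
      rw [e1, e2]; linarith
    nlinarith [hΔHpos, hΔTpos, hε0]
  -- two-valued version Y of X
  set Y : ℕ → Ω → ℝ := fun i ω => if X i ω = ΔH then ΔH else -ΔT with hYdef
  have hsing : MeasurableSet {x : ℝ | x = ΔH} := by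
    rw [Set.setOf_eq_eq_singleton]
    exact measurableSet_singleton ΔH
  have hYmeas : ∀ i, Measurable (Y i) := by
    intro i
    apply Measurable.ite _ measurable_const measurable_const
    exact (hXmeas i) hsing
  have hYindep : iIndepFun Y P := by
    have := hXindep.comp (fun _ (x : ℝ) => if x = ΔH then ΔH else -ΔT)
      (fun _ => Measurable.ite hsing measurable_const measurable_const)
    exact this
  set A : ℕ → Set Ω := fun i => {ω | X i ω = ΔH} with hAdef
  have hAmeas : ∀ i, MeasurableSet (A i) := fun i => (hXmeas i) hsing
  have hAP : ∀ i, P (A i) = ENNReal.ofReal (p + ε) := hXup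
  have hYA : ∀ i ω, ω ∈ A i → Y i ω = ΔH := by
    intro i ω hω
    have : X i ω = ΔH := hω
    simp only [hYdef, this, if_true]
  have hYnA : ∀ i ω, ω ∉ A i → Y i ω = -ΔT := by
    intro i ω hω
    have : ¬ (X i ω = ΔH) := hω
    simp only [hYdef, this, if_false]
  have hA0 : A 0 = Y 0 ⁻¹' {ΔH} := by
    ext ω
    constructor
    · intro hω; simp only [Set.mem_preimage, Set.mem_singleton_iff]; exact hYA 0 ω hω
    · intro hω
      simp only [Set.mem_preimage, Set.mem_singleton_iff] at hω
      by_contra hc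
      rw [hYnA 0 ω hc] at hω
      exact hne hω.symm
  -- integrals
  have hEY : ∀ i, ∫ ω, Y i ω ∂P = μR := by
    intro i
    have hrep : ∀ ω, Y i ω = (A i).indicator (fun _ => ΔH + ΔT) ω + (-ΔT) := by
      intro ω
      by_cases hω : ω ∈ A i
      · rw [hYA i ω hω, Set.indicator_of_mem hω]; ring
      · rw [hYnA i ω hω, Set.indicator_of_notMem hω]; ring
    have hint : Integrable ((A i).indicator (fun _ => ΔH + ΔT)) P :=
      (integrable_const (ΔH + ΔT)).indicator (hAmeas i)
    calc ∫ ω, Y i ω ∂P = ∫ ω, ((A i).indicator (fun _ => ΔH + ΔT) ω + (-ΔT)) ∂P := by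
          exact integral_congr_ae (Filter.Eventually.of_forall hrep)
      _ = (∫ ω, (A i).indicator (fun _ => ΔH + ΔT) ω ∂P) + ∫ _ω, (-ΔT) ∂P :=
          integral_add hint (integrable_const _)
      _ = (P (A i)).toReal * (ΔH + ΔT) + (-ΔT) := by
          rw [integral_indicator_const _ (hAmeas i), integral_const]
          simp [smul_eq_mul, measureReal_def]
      _ = μR := by
          rw [hAP i, ENNReal.toReal_ofReal hb.le, hμRdef]
          ring
  have hEexp : ∀ i, ∫ ω, Real.exp (-(Y i ω)) ∂P = 1 := by
    intro i
    have hrep : ∀ ω, Real.exp (-(Y i ω))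
        = (A i).indicator (fun _ => Real.exp (-ΔH) - Real.exp ΔT) ω + Real.exp ΔT := by
      intro ω
      by_cases hω : ω ∈ A i
      · rw [hYA i ω hω, Set.indicator_of_mem hω]; ring
      · rw [hYnA i ω hω, Set.indicator_of_notMem hω]; ring_nf
    have hint : Integrable ((A i).indicator (fun _ => Real.exp (-ΔH) - Real.exp ΔT)) P :=
      (integrable_const _).indicator (hAmeas i)
    calc ∫ ω, Real.exp (-(Y i ω)) ∂P
        = ∫ ω, ((A i).indicator (fun _ => Real.exp (-ΔH) - Real.exp ΔT) ω + Real.exp ΔT) ∂P :=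
          integral_congr_ae (Filter.Eventually.of_forall hrep)
      _ = (P (A i)).toReal * (Real.exp (-ΔH) - Real.exp ΔT) + Real.exp ΔT := by
          rw [integral_add hint (integrable_const _),
            integral_indicator_const _ (hAmeas i), integral_const]
          simp [smul_eq_mul, measureReal_def]
      _ = 1 := by
          rw [hAP i, ENNReal.toReal_ofReal hb.le, hexpH, hexpT]
          field_simp
          ring
  have hEint : ∀ i, Integrable (fun ω => Real.exp (-(Y i ω))) P := by
    intro i
    refine Integrable.mono' (integrable_const (Real.exp (-ΔH) + Real.exp ΔT))
      ((hYmeas i).neg.exp).aestronglyMeasurable (Filter.Eventually.of_forall fun ω => ?_)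
    rw [Real.norm_eq_abs, abs_of_pos (Real.exp_pos _)]
    by_cases hω : ω ∈ A i
    · rw [hYA i ω hω]
      have := Real.exp_pos ΔT
      linarith
    · rw [hYnA i ω hω]
      have := Real.exp_pos (-ΔH)
      simp only [neg_neg]
      linarith
  -- shifted sequence
  set Z : ℕ → Ω → ℝ := fun i => Y (i + 1) with hZdef
  have hZmeas : ∀ i, Measurable (Z i) := fun i => hYmeas (i + 1)
  have hZindep : iIndepFun Z P := by
    rw [iIndepFun_iff_measure_inter_preimage_eq_mul]
    intro Sf sets hsets
    set e : ℕ ↪ ℕ := ⟨fun i => i + 1, fun a b h' => by simpa using h'⟩ with hedef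
    have h1 := iIndepFun_iff_measure_inter_preimage_eq_mul.1 hYindep
      (Sf.map e) (sets := fun j => sets (j - 1)) (fun j hj => by
        obtain ⟨i, hi, rfl⟩ := Finset.mem_map.1 hj
        show MeasurableSet (sets (i + 1 - 1))
        simpa [hedef] using hsets i hi)
    have hset : (⋂ j ∈ Sf.map e, Y j ⁻¹' sets (j - 1)) = ⋂ i ∈ Sf, Z i ⁻¹' sets i := by
      ext ω
      simp only [Set.mem_iInter, Finset.mem_map, hedef, Function.Embedding.coeFn_mk]
      constructor
      · intro hω i hi
        have := hω (i + 1) ⟨i, hi, rfl⟩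
        simpa [hZdef] using this
      · rintro hω j ⟨i, hi, rfl⟩
        show Y (i + 1) ω ∈ sets (i + 1 - 1)
        simpa [hZdef] using hω i hi
    have hprod : (∏ j ∈ Sf.map e, P (Y j ⁻¹' sets (j - 1)))
        = ∏ i ∈ Sf, P (Z i ⁻¹' sets i) := by
      rw [Finset.prod_map]
      refine Finset.prod_congr rfl fun i _ => ?_
      show P (Y (i + 1) ⁻¹' sets (i + 1 - 1)) = _
      simp [hedef, hZdef]
    rw [hset, hprod] at h1
    exact h1
  set T : ℕ → Ω → ℝ := fun m ω => ∑ i ∈ Finset.range m, Z i ω with hTdef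
  have hTmeas : ∀ m, Measurable (T m) := fun m =>
    Finset.measurable_sum _ fun i _ => hZmeas i
  have hVille : ∀ M : ℕ, P {ω | ∃ m, m < M ∧ T m ω < -ΔH}
      ≤ ENNReal.ofReal ((p - ε) / (p + ε)) := by
    intro M
    have := aux_ville P Z hZmeas hZindep (fun i => hEint (i + 1)) (fun i => hEexp (i + 1))
      ΔH hΔHpos M
    rwa [hexpH] at this
  -- events V_M and independence from A 0
  set V : ℕ → Set Ω := fun M => {ω | ∀ m < M, -ΔH ≤ T m ω} with hVdef
  have hVmeas : ∀ M, MeasurableSet (V M) := by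
    intro M
    have : V M = ⋂ m, ⋂ (_ : m < M), {ω | -ΔH ≤ T m ω} := by
      ext ω; simp [hVdef]
    rw [this]
    exact MeasurableSet.iInter fun m => MeasurableSet.iInter fun _ =>
      measurableSet_le measurable_const (hTmeas m)
  have hVbound : ∀ M, ENNReal.ofReal (2 * ε) ≤ P (A 0 ∩ V M) := by
    intro M
    -- independence
    have hdisj : Disjoint ({0} : Finset ℕ) (Finset.Icc 1 M) := by
      simp [Finset.disjoint_singleton_left]
    have base := hYindep.indepFun_finset {0} (Finset.Icc 1 M) hdisj hYmeas
    set pT : ℕ → (↥(Finset.Icc 1 M) → ℝ) → ℝ := fun m v =>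
      ∑ i ∈ Finset.range m, if hi : i + 1 ∈ Finset.Icc 1 M then v ⟨i + 1, hi⟩ else 0
      with hpTdef
    have hpTmeas : ∀ m, Measurable (pT m) := by
      intro m
      apply Finset.measurable_sum
      intro i _
      by_cases hi : i + 1 ∈ Finset.Icc 1 M
      · simp only [hi, dif_pos]; exact measurable_pi_apply _
      · simp only [hi, dif_neg, not_false_iff]; exact measurable_const
    have hpT : ∀ m < M, ∀ ω, pT m (fun i => Y i ω) = T m ω := by
      intro m hm ω
      rw [hpTdef, hTdef]
      refine Finset.sum_congr rfl fun i hi => ?_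
      have hii : i + 1 ∈ Finset.Icc 1 M := by
        rw [Finset.mem_Icc]
        have := Finset.mem_range.1 hi
        omega
      simp [hii, hZdef]
    set Vh : Set (↥(Finset.Icc 1 M) → ℝ) := {v | ∀ m < M, -ΔH ≤ pT m v} with hVhdef
    have hVhmeas : MeasurableSet Vh := by
      have : Vh = ⋂ m, ⋂ (_ : m < M), {v | -ΔH ≤ pT m v} := by
        ext v; simp [hVhdef]
      rw [this]
      exact MeasurableSet.iInter fun m => MeasurableSet.iInter fun _ =>
        measurableSet_le measurable_const (hpTmeas m)
    set Ah : Set (↥({0} : Finset ℕ) → ℝ) :=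
      (fun w : ↥({0} : Finset ℕ) → ℝ => w ⟨0, Finset.mem_singleton_self 0⟩) ⁻¹' {ΔH} with hAhdef
    have hAhmeas : MeasurableSet Ah :=
      (measurable_pi_apply _) (measurableSet_singleton ΔH)
    have hpre1 : (fun ω (i : ↥({0} : Finset ℕ)) => Y i ω) ⁻¹' Ah = A 0 := by
      ext ω
      simp only [hAhdef, Set.mem_preimage, Set.mem_singleton_iff]
      rw [hA0]
      rfl
    have hpre2 : (fun ω (i : ↥(Finset.Icc 1 M)) => Y i ω) ⁻¹' Vh = V M := by
      ext ω
      simp only [hVhdef, Set.mem_preimage, Set.mem_setOf_eq, hVdef]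
      constructor
      · intro hv m hm
        have := hv m hm
        rwa [hpT m hm ω] at this
      · intro hω m hm
        rw [hpT m hm ω]
        exact hω m hm
    have hmul := base.measure_inter_preimage_eq_mul Ah Vh hAhmeas hVhmeas
    rw [hpre1, hpre2] at hmul
    -- V M complement bound
    have hcompl : (V M)ᶜ = {ω | ∃ m, m < M ∧ T m ω < -ΔH} := by
      ext ω
      simp only [hVdef, Set.mem_compl_iff, Set.mem_setOf_eq, not_forall, not_le]
      constructor
      · rintro ⟨m, hm, hlt⟩; exact ⟨m, hm, hlt⟩
      · rintro ⟨m, hm, hlt⟩; exact ⟨m, hm, hlt⟩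
    have hVM : 1 - ENNReal.ofReal ((p - ε) / (p + ε)) ≤ P (V M) := by
      have h1 : P (V M) + P ((V M)ᶜ) = 1 := by
        rw [measure_add_measure_compl (hVmeas M), measure_univ]
      have h2 : P ((V M)ᶜ) ≤ ENNReal.ofReal ((p - ε) / (p + ε)) := by
        rw [hcompl]; exact hVille M
      have h3 : 1 - ENNReal.ofReal ((p - ε) / (p + ε)) ≤ 1 - P ((V M)ᶜ) :=
        tsub_le_tsub_left h2 1
      have h4 : 1 - P ((V M)ᶜ) ≤ P (V M) := by
        rw [← h1]
        simp
      exact le_trans h3 h4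
    -- combine
    rw [hmul, hAP 0]
    calc ENNReal.ofReal (2 * ε)
        = ENNReal.ofReal (p + ε) * (1 - ENNReal.ofReal ((p - ε) / (p + ε))) := by
          rw [ENNReal.mul_sub (fun _ _ => ENNReal.ofReal_ne_top), mul_one,
            ← ENNReal.ofReal_mul hb.le]
          rw [mul_div_cancel₀ _ (ne_of_gt hb)]
          rw [← ENNReal.ofReal_sub _ ha.le]
          congr 1
          ring
      _ ≤ ENNReal.ofReal (p + ε) * P (V M) := by
          exact mul_le_mul_right hVM _
  -- intersect over all M
  set Vall : Set Ω := ⋂ M, V M with hValldef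
  have hAVlim : ENNReal.ofReal (2 * ε) ≤ P (A 0 ∩ Vall) := by
    have hanti : Antitone (fun M => A 0 ∩ V M) := by
      intro M N hMN
      apply Set.inter_subset_inter_right
      intro ω hω m hm
      exact hω m (lt_of_lt_of_le hm hMN)
    have htend := tendsto_measure_iInter_atTop (μ := P) (s := fun M : ℕ => A 0 ∩ V M)
      (fun M => ((hAmeas 0).inter (hVmeas M)).nullMeasurableSet) hanti
      ⟨0, measure_ne_top _ _⟩
    have hint : (⋂ M, (A 0 ∩ V M)) = A 0 ∩ Vall := by
      rw [hValldef, Set.inter_iInter]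
    rw [hint] at htend
    exact ge_of_tendsto htend (Filter.Eventually.of_forall fun M => hVbound M)
  -- Chebyshev: the walk exceeds B almost surely
  set Sy : ℕ → Ω → ℝ := fun n ω => ∑ i ∈ Finset.range n, Y i ω with hSydef
  have hYbd : ∀ i ω, |Y i ω - μR| ≤ ΔH + ΔT + |μR| := by
    intro i ω
    have h1 : |Y i ω| ≤ ΔH + ΔT := by
      by_cases hω : ω ∈ A i
      · rw [hYA i ω hω, abs_of_pos hΔHpos]; linarith
      · rw [hYnA i ω hω, abs_neg, abs_of_pos hΔTpos]; linarith
    calc |Y i ω - μR| = |Y i ω + (-μR)| := by ring_nf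
      _ ≤ |Y i ω| + |(-μR)| := abs_add_le _ _
      _ = |Y i ω| + |μR| := by rw [abs_neg]
      _ ≤ ΔH + ΔT + |μR| := by linarith
  have hcheb := aux_cheby P Y hYmeas hYindep μR (ΔH + ΔT + |μR|) B hμpos
    (by positivity) hYbd hEY
  -- a.e. two-valuedness
  set D : ℕ → Set Ω := fun i => {ω | X i ω = ΔH ∨ X i ω = -ΔT} with hDdef
  have hsing' : MeasurableSet {x : ℝ | x = -ΔT} := by
    rw [Set.setOf_eq_eq_singleton]
    exact measurableSet_singleton _
  have hDmeas : ∀ i, MeasurableSet (D i) := by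
    intro i
    have hrw : D i = A i ∪ {ω | X i ω = -ΔT} := by
      ext ω; simp [hDdef, hAdef]
    rw [hrw]
    exact (hAmeas i).union ((hXmeas i) hsing')
  have hDc : ∀ i, P ((D i)ᶜ) = 0 := by
    intro i
    have hdisj : Disjoint (A i) {ω | X i ω = -ΔT} := by
      rw [Set.disjoint_left]
      intro ω h1 h2
      simp only [hAdef, Set.mem_setOf_eq] at h1 h2
      rw [h1] at h2
      exact hne h2
    have hrw : D i = A i ∪ {ω | X i ω = -ΔT} := by
      ext ω; simp [hDdef, hAdef]
    have hDone : P (D i) = 1 := by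
      rw [hrw, measure_union hdisj ((hXmeas i) hsing'), hAP i, hXdown i,
        ← ENNReal.ofReal_add hb.le hqe.le]
      have : p + ε + (1 - p - ε) = 1 := by ring
      rw [this, ENNReal.ofReal_one]
    rw [measure_compl (hDmeas i) (measure_ne_top _ _), measure_univ, hDone, tsub_self]
  set Dall : Set Ω := ⋂ i, D i with hDalldef
  have hDallc : P (Dallᶜ) = 0 := by
    rw [hDalldef, Set.compl_iInter]
    exact measure_iUnion_null fun i => hDc i
  set U : Set Ω := {ω | ∃ n, B ≤ Sy n ω} with hUdef
  have hUc : P (Uᶜ) = 0 := by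
    have hrw : Uᶜ = {ω | ∀ n, Sy n ω < B} := by
      ext ω
      simp only [hUdef, Set.mem_compl_iff, Set.mem_setOf_eq, not_exists, not_le]
    rw [hrw]
    exact hcheb
  set E : Set Ω := {ω | (hit ω).Nonempty ∧ B ≤ S (sInf (hit ω)) ω} with hEdef
  -- inclusion
  have hincl : (A 0 ∩ Vall) ⊆ (E ∪ Uᶜ) ∪ Dallᶜ := by
    intro ω hω
    by_cases hU : ω ∈ U
    swap
    · exact Or.inl (Or.inr hU)
    by_cases hD : ω ∈ Dall
    swap
    · exact Or.inr hD
    obtain ⟨hA0ω, hVω⟩ := hω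
    have hXY : ∀ i, X i ω = Y i ω := by
      intro i
      have hDi : ω ∈ D i := Set.mem_iInter.1 hD i
      rcases hDi with h1 | h1
      · rw [h1]; exact (hYA i ω h1).symm
      · have hni : ω ∉ A i := by
          intro hc
          have : X i ω = ΔH := hc
          rw [this] at h1
          exact hne h1
        rw [h1]; exact (hYnA i ω hni).symm
    have hSY : ∀ n, S n ω = Sy n ω := by
      intro n
      rw [hS n ω, hSydef]
      exact Finset.sum_congr rfl fun i _ => hXY i
    have hY0 : Y 0 ω = ΔH := hYA 0 ω hA0ω
    have hpos : ∀ n, 1 ≤ n → 0 ≤ Sy n ω := by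
      intro n hn
      cases n with
      | zero => omega
      | succ m =>
        have hsum : Sy (m + 1) ω = (∑ i ∈ Finset.range m, Y (i + 1) ω) + Y 0 ω := by
          rw [hSydef]
          exact Finset.sum_range_succ' _ _
        have hTm : -ΔH ≤ T m ω := by
          have hVm : ω ∈ V (m + 1) := Set.mem_iInter.1 hVω (m + 1)
          exact hVm m (Nat.lt_succ_self m)
        have hTm' : T m ω = ∑ i ∈ Finset.range m, Y (i + 1) ω := rfl
        rw [hsum, hY0, ← hTm']
        linarith
    obtain ⟨n, hn⟩ := hU
    have hn1 : 1 ≤ n := by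
      by_contra hc
      push_neg at hc
      have hn0 : n = 0 := by omega
      rw [hn0] at hn
      have : Sy 0 ω = 0 := by simp [hSydef]
      rw [this] at hn
      linarith
    have hhitω : n ∈ hit ω := by
      rw [hhit ω]
      exact ⟨hn1, Or.inl (by rw [hSY n]; exact hn)⟩
    have hnon : (hit ω).Nonempty := ⟨n, hhitω⟩
    set m0 := sInf (hit ω) with hm0
    have hmem : m0 ∈ hit ω := Nat.sInf_mem hnon
    rw [hhit ω] at hmem
    obtain ⟨hm1, hmor⟩ := hmem
    left; left
    refine ⟨hnon, ?_⟩
    rcases hmor with h1 | h1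
    · exact h1
    · exfalso
      have h2 := hpos m0 hm1
      rw [hSY] at h1
      linarith
  have hchain : ENNReal.ofReal (2 * ε) ≤ P E := by
    calc ENNReal.ofReal (2 * ε) ≤ P (A 0 ∩ Vall) := hAVlim
      _ ≤ P ((E ∪ Uᶜ) ∪ Dallᶜ) := measure_mono hincl
      _ ≤ P (E ∪ Uᶜ) + P (Dallᶜ) := measure_union_le _ _
      _ = P (E ∪ Uᶜ) := by rw [hDallc, add_zero]
      _ ≤ P E + P (Uᶜ) := measure_union_le _ _
      _ = P E := by rw [hUc, add_zero]
  calc ENNReal.ofReal ((ΔH * (p + ε) - ΔT * (1 - p - ε)) / (2 * (ΔH + ΔT)))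
      ≤ ENNReal.ofReal (2 * ε) := ENNReal.ofReal_le_ofReal hc2
    _ ≤ P E := hchain
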